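/- Let f, g : [-1,1] → ℝ be such that f is of r-H_f-Hölder type on [−1,1], i.e. |f(x) − f(y)| ≤ H_f·|x − y|^r for all x, y ∈ [−1,1], where r > 0 and H_f > 0 are given, and g is L_g-Lipschitzian on [−1,1], i.e. |g(x) − g(y)| ≤ L_g·|x − y| for all x, y ∈ [−1,1], with g(−1) < g(1). Define A = (√3/2)·[∫_{-1}^{1} g(t) dt − ((3−√3)/3)·g(1) − ((3+√3)/3)·g(−1)] and B = (√3/2)·[((3+√3)/3)·g(1) + ((3−√3)/3)·g(−1) − ∫_{-1}^{1} g(t) dt], and assume A ≥ 0 and B ≥ 0. Then |∫_{-1}^{1} f(t) dg(t) − A·f(−√3/3) − B·f(√3/3)| ≤ (L_g·H_f/(r+1))·[((3−√3)/3)^{r+1} + ((3+√3)/3)^{r+1}]. -/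

import Mathlib

open MeasureTheory intervalIntegral

/-- `IsRSIntegral f g a b I` means that the Riemann–Stieltjes integral
`∫_a^b f dg` exists and equals `I`: for every `ε > 0` there is `δ > 0` such that
every tagged partition `a = t 0 ≤ t 1 ≤ ⋯ ≤ t n = b` of mesh `< δ`, with tags
`ξ i ∈ [t i, t (i+1)]`, has Riemann–Stieltjes sum within `ε` of `I`. -/
def IsRSIntegral (f g : ℝ → ℝ) (a b I : ℝ) : Prop :=
  ∀ ε > (0 : ℝ), ∃ δ > (0 : ℝ), ∀ (n : ℕ) (t : Fin (n + 1) → ℝ) (ξ : Fin n → ℝ),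
    Monotone t → t 0 = a → t (Fin.last n) = b →
    (∀ i : Fin n, ξ i ∈ Set.Icc (t i.castSucc) (t i.succ)) →
    (∀ i : Fin n, t i.succ - t i.castSucc < δ) →
    |(∑ i : Fin n, f (ξ i) * (g (t i.succ) - g (t i.castSucc))) - I| < ε


lemma clamp_dist (a b c τ : ℝ) (hab : a ≤ b) (h1 : a ≤ τ) (h2 : τ ≤ b) :
    |max a (min c b) - c| ≤ |τ - c| := by
  rcases le_total c a with h | h
  · rw [min_eq_left (h.trans hab), max_eq_left h,
      abs_of_nonneg (by linarith), abs_of_nonneg (by linarith)]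
    linarith
  · rcases le_total c b with h' | h'
    · rw [min_eq_left h', max_eq_right h]
      simp
    · rw [min_eq_right h', max_eq_right hab,
        abs_of_nonpos (by linarith), abs_of_nonpos (by linarith)]
      linarith

lemma cont_abs_rpow (c r : ℝ) (hr : 0 < r) : Continuous fun τ : ℝ => |τ - c| ^ r :=
  Continuous.rpow_const (continuous_abs.comp (continuous_id.sub continuous_const))
    (fun _ => Or.inr hr.le)

lemma integral_abs_rpow (r c : ℝ) (hr : 0 < r) (hc1 : (-1:ℝ) ≤ c) (hc2 : c ≤ 1) :
    ∫ τ in (-1:ℝ)..1, |τ - c| ^ r = ((c+1)^(r+1) + (1-c)^(r+1)) / (r+1) := by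
  have hint : ∀ a b : ℝ, IntervalIntegrable (fun τ => |τ - c| ^ r) volume a b :=
    fun a b => (cont_abs_rpow c r hr).intervalIntegrable a b
  have hsplit := integral_add_adjacent_intervals (hint (-1) c) (hint c 1)
  have h1 : ∫ τ in (-1:ℝ)..c, |τ - c| ^ r = (c+1)^(r+1) / (r+1) := by
    have : ∫ τ in (-1:ℝ)..c, |τ - c| ^ r = ∫ τ in (-1:ℝ)..c, (fun x => x ^ r) (c - τ) := by
      apply integral_congr
      intro x hx
      rw [Set.uIcc_of_le (by linarith)] at hx
      simp only [abs_sub_comm x c, abs_of_nonneg (by linarith [hx.2] : (0:ℝ) ≤ c - x)]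
    rw [this, integral_comp_sub_left (fun x => x ^ r) c]
    rw [integral_rpow (Or.inl (by linarith))]
    rw [show c - c = 0 by ring, Real.zero_rpow (by positivity)]
    ring_nf
  have h2 : ∫ τ in c..(1:ℝ), |τ - c| ^ r = (1-c)^(r+1) / (r+1) := by
    have : ∫ τ in c..(1:ℝ), |τ - c| ^ r = ∫ τ in c..(1:ℝ), (fun x => x ^ r) (τ - c) := by
      apply integral_congr
      intro x hx
      rw [Set.uIcc_of_le (by linarith)] at hx
      simp only [abs_of_nonneg (by linarith [hx.1] : (0:ℝ) ≤ x - c)]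
    rw [this, integral_comp_sub_right (fun x => x ^ r) c]
    rw [integral_rpow (Or.inl (by linarith))]
    rw [show c - c = 0 by ring, Real.zero_rpow (by positivity)]
    ring_nf
  rw [← hsplit, h1, h2]
  ring

lemma Fle (r s x0 : ℝ) (hr : 0 < r) (hs0 : 0 ≤ s) (hs1 : s ≤ 1)
    (h1 : -1 ≤ x0) (h2 : x0 ≤ 1) :
    (∫ τ in (-1:ℝ)..x0, |τ - (-s)| ^ r) + ∫ τ in x0..(1:ℝ), |τ - s| ^ r
      ≤ ((1-s)^(r+1) + (1+s)^(r+1)) / (r+1) := by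
  have hint : ∀ c a b : ℝ, IntervalIntegrable (fun τ => |τ - c| ^ r) volume a b :=
    fun c a b => (cont_abs_rpow c r hr).intervalIntegrable a b
  rcases le_total x0 0 with hx | hx
  · have hcmp : (∫ τ in (-1:ℝ)..x0, |τ - (-s)| ^ r) ≤ ∫ τ in (-1:ℝ)..x0, |τ - s| ^ r := by
      apply integral_mono_on h1 (hint _ _ _) (hint _ _ _)
      intro τ hτ
      apply Real.rpow_le_rpow (abs_nonneg _) ?_ hr.le
      rcases abs_cases (τ - -s) with ⟨e1, e2⟩ | ⟨e1, e2⟩ <;>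
        rcases abs_cases (τ - s) with ⟨e3, e4⟩ | ⟨e3, e4⟩ <;>
        · rw [e1, e3]; linarith [hτ.2]
    have hsum : (∫ τ in (-1:ℝ)..x0, |τ - s| ^ r) + ∫ τ in x0..(1:ℝ), |τ - s| ^ r
        = ∫ τ in (-1:ℝ)..(1:ℝ), |τ - s| ^ r := integral_add_adjacent_intervals (hint _ _ _) (hint _ _ _)
    have hval := integral_abs_rpow r s hr (by linarith) hs1
    have : (∫ τ in (-1:ℝ)..x0, |τ - s| ^ r) + ∫ τ in x0..(1:ℝ), |τ - s| ^ r
        = ((1-s)^(r+1) + (1+s)^(r+1)) / (r+1) := by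
      rw [hsum, hval]
      rw [show s + 1 = 1 + s by ring]
      ring
    linarith
  · have hcmp : (∫ τ in x0..(1:ℝ), |τ - s| ^ r) ≤ ∫ τ in x0..(1:ℝ), |τ - -s| ^ r := by
      apply integral_mono_on h2 (hint _ _ _) (hint _ _ _)
      intro τ hτ
      apply Real.rpow_le_rpow (abs_nonneg _) ?_ hr.le
      rcases abs_cases (τ - s) with ⟨e1, e2⟩ | ⟨e1, e2⟩ <;>
        rcases abs_cases (τ - -s) with ⟨e3, e4⟩ | ⟨e3, e4⟩ <;>
        · rw [e1, e3]; linarith [hτ.1]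
    have hsum : (∫ τ in (-1:ℝ)..x0, |τ - -s| ^ r) + ∫ τ in x0..(1:ℝ), |τ - -s| ^ r
        = ∫ τ in (-1:ℝ)..(1:ℝ), |τ - -s| ^ r := integral_add_adjacent_intervals (hint _ _ _) (hint _ _ _)
    have hval := integral_abs_rpow r (-s) hr (by linarith) (by linarith)
    have : (∫ τ in (-1:ℝ)..x0, |τ - -s| ^ r) + ∫ τ in x0..(1:ℝ), |τ - -s| ^ r
        = ((1-s)^(r+1) + (1+s)^(r+1)) / (r+1) := by
      rw [hsum, hval]
      rw [show -s + 1 = 1 - s by ring, show (1:ℝ) - -s = 1 + s by ring]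
    linarith

noncomputable def upart (x0 : ℝ) (m k : ℕ) : ℝ :=
  if k ≤ m then -1 + k*(x0+1)/m else x0 + ((k:ℝ)-m)*(1-x0)/m

lemma upart_zero (x0 : ℝ) (m : ℕ) : upart x0 m 0 = -1 := by simp [upart]

lemma upart_m (x0 : ℝ) (m : ℕ) (hm : 0 < m) : upart x0 m m = x0 := by
  have hm' : (m:ℝ) ≠ 0 := Nat.cast_ne_zero.mpr hm.ne'
  simp only [upart, if_pos (le_refl m)]
  field_simp
  ring

lemma upart_2m (x0 : ℝ) (m : ℕ) (hm : 0 < m) : upart x0 m (2*m) = 1 := by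
  have hm' : (m:ℝ) ≠ 0 := Nat.cast_ne_zero.mpr hm.ne'
  have h : ¬ (2*m ≤ m) := by omega
  simp only [upart, if_neg h]
  push_cast
  field_simp
  ring

lemma upart_step (x0 : ℝ) (m : ℕ) (hm : 0 < m) (h1 : -1 ≤ x0) (h2 : x0 ≤ 1) (k : ℕ) :
    upart x0 m k ≤ upart x0 m (k+1) ∧ upart x0 m (k+1) - upart x0 m k ≤ 2/m := by
  have hm0 : (0:ℝ) < m := Nat.cast_pos.mpr hm
  by_cases h : k + 1 ≤ m
  · have h' : k ≤ m := by omega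
    simp only [upart, if_pos h, if_pos h']
    have he : (-1 + (↑(k+1):ℝ)*(x0+1)/m) - (-1 + (k:ℝ)*(x0+1)/m) = (x0+1)/m := by
      push_cast; ring
    constructor
    · nlinarith [he, div_nonneg (by linarith : (0:ℝ) ≤ x0 + 1) hm0.le]
    · rw [he, div_le_div_iff₀ hm0 hm0]; nlinarith
  · by_cases h' : k ≤ m
    · have hk : k = m := by omega
      subst hk
      have hne : ¬ (k + 1 ≤ k) := by omega
      simp only [upart, if_pos (le_refl k), if_neg hne]
      have hm' : (k:ℝ) ≠ 0 := Nat.cast_ne_zero.mpr hm.ne'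
      have he : (x0 + ((↑(k+1):ℝ)-k)*(1-x0)/k) - (-1 + (k:ℝ)*(x0+1)/k) = (1-x0)/k := by
        push_cast; field_simp; ring
      constructor
      · nlinarith [he, div_nonneg (by linarith : (0:ℝ) ≤ 1 - x0) hm0.le]
      · rw [he, div_le_div_iff₀ hm0 hm0]; nlinarith
    · have hne : ¬ (k + 1 ≤ m) := by omega
      simp only [upart, if_neg h', if_neg hne]
      have he : (x0 + ((↑(k+1):ℝ)-m)*(1-x0)/m) - (x0 + ((k:ℝ)-m)*(1-x0)/m) = (1-x0)/m := by
        push_cast; field_simp; ring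
      constructor
      · nlinarith [he, div_nonneg (by linarith : (0:ℝ) ≤ 1 - x0) hm0.le]
      · rw [he, div_le_div_iff₀ hm0 hm0]; nlinarith

/-- If `f` is of `r`-`H_f`-Hölder type on `[-1,1]` and `g` is
`L_g`-Lipschitzian on `[-1,1]` with `g (-1) < g 1`, and the weights `A`, `B` of
the two-point Gauss–Legendre rule are nonnegative, then
`|∫_{-1}^1 f dg - A·f(-√3/3) - B·f(√3/3)|
  ≤ (L_g·H_f/(r+1)) · [((3-√3)/3)^(r+1) + ((3+√3)/3)^(r+1)]`. -/
theorem two_point_GL_holder_lipschitz (f g : ℝ → ℝ) (r Hf Lg : ℝ)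
    (hr : 0 < r) (hHf : 0 < Hf)
    (hf : ∀ x ∈ Set.Icc (-1 : ℝ) 1, ∀ y ∈ Set.Icc (-1 : ℝ) 1,
      |f x - f y| ≤ Hf * |x - y| ^ r)
    (hg : ∀ x ∈ Set.Icc (-1 : ℝ) 1, ∀ y ∈ Set.Icc (-1 : ℝ) 1,
      |g x - g y| ≤ Lg * |x - y|)
    (hg' : g (-1) < g 1)
    (I : ℝ) (hI : IsRSIntegral f g (-1) 1 I)
    (A B : ℝ)
    (hA : A = (Real.sqrt 3 / 2) *
      ((∫ t in (-1 : ℝ)..1, g t) - ((3 - Real.sqrt 3) / 3) * g 1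
        - ((3 + Real.sqrt 3) / 3) * g (-1)))
    (hB : B = (Real.sqrt 3 / 2) *
      (((3 + Real.sqrt 3) / 3) * g 1 + ((3 - Real.sqrt 3) / 3) * g (-1)
        - ∫ t in (-1 : ℝ)..1, g t))
    (hA0 : 0 ≤ A) (hB0 : 0 ≤ B) :
    |I - A * f (-(Real.sqrt 3) / 3) - B * f (Real.sqrt 3 / 3)|
      ≤ (Lg * Hf / (r + 1))
        * (((3 - Real.sqrt 3) / 3) ^ (r + 1) + ((3 + Real.sqrt 3) / 3) ^ (r + 1)) := by
  have h3 : Real.sqrt 3 * Real.sqrt 3 = 3 := Real.mul_self_sqrt (by norm_num)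
  have hs3nn : 0 ≤ Real.sqrt 3 := Real.sqrt_nonneg 3
  have hs3le : Real.sqrt 3 ≤ 3 := by nlinarith
  set s : ℝ := Real.sqrt 3 / 3 with hs
  have hs0 : 0 ≤ s := by positivity
  have hs1 : s ≤ 1 := by rw [hs]; linarith
  have hx1 : -(Real.sqrt 3) / 3 = -s := by rw [hs]; ring
  have hx1mem : -s ∈ Set.Icc (-1:ℝ) 1 := ⟨by linarith, by linarith⟩
  have hx2mem : s ∈ Set.Icc (-1:ℝ) 1 := ⟨by linarith, by linarith⟩
  have hABsum : A + B = g 1 - g (-1) := by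
    rw [hA, hB]; linear_combination ((g 1 - g (-1))/3) * h3
  have h1mem : (1:ℝ) ∈ Set.Icc (-1:ℝ) 1 := ⟨by norm_num, le_refl 1⟩
  have hm1mem : (-1:ℝ) ∈ Set.Icc (-1:ℝ) 1 := ⟨le_refl _, by norm_num⟩
  have hLg : 0 < Lg := by
    have h := hg 1 h1mem (-1) hm1mem
    rw [abs_of_pos (by linarith : (0:ℝ) < g 1 - g (-1))] at h
    have h2 : |(1:ℝ) - -1| = 2 := by norm_num
    rw [h2] at h; linarith
  have hgcont : ContinuousOn g (Set.Icc (-1:ℝ) 1) := by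
    have hlip : LipschitzOnWith (Real.toNNReal Lg) g (Set.Icc (-1:ℝ) 1) := by
      apply LipschitzOnWith.of_dist_le_mul
      intro x hx y hy
      rw [Real.dist_eq, Real.dist_eq, Real.coe_toNNReal _ hLg.le]
      exact hg x hx y hy
    exact hlip.continuousOn
  obtain ⟨x0, hx0mem, hgx0⟩ := intermediate_value_Icc (by norm_num : (-1:ℝ) ≤ 1) hgcont
    (⟨by linarith, by linarith⟩ : g (-1) + A ∈ Set.Icc (g (-1)) (g 1))
  obtain ⟨hx01, hx02⟩ := hx0mem
  rw [hx1]
  apply le_of_forall_pos_le_add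
  intro ε hε
  obtain ⟨δ, hδ, hP⟩ := hI ε hε
  obtain ⟨m0, hm0⟩ := exists_nat_gt (2/δ)
  set m : ℕ := m0 + 1 with hmdef
  have hmpos : 0 < m := Nat.succ_pos m0
  have hmR : (0:ℝ) < m := Nat.cast_pos.mpr hmpos
  have hm0m : (2:ℝ)/δ < (m:ℝ) := by
    calc (2:ℝ)/δ < m0 := hm0
    _ ≤ m := by exact_mod_cast Nat.le_succ m0
  have hmesh : 2/(m:ℝ) < δ := by
    rw [div_lt_iff₀ hmR]
    have h2 : 2 < (m:ℝ) * δ := by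
      have := (div_lt_iff₀ hδ).mp hm0m
      linarith
    linarith [mul_comm δ (m:ℝ), h2, (mul_comm δ (m:ℝ)).le]
  set u : ℕ → ℝ := upart x0 m with hu
  have hstep : ∀ k, u k ≤ u (k+1) ∧ u (k+1) - u k ≤ 2/m :=
    fun k => upart_step x0 m hmpos hx01 hx02 k
  have humono : Monotone u := monotone_nat_of_le_succ (fun k => (hstep k).1)
  have hu0 : u 0 = -1 := upart_zero x0 m
  have hum : u m = x0 := upart_m x0 m hmpos
  have hu2m : u (2*m) = 1 := upart_2m x0 m hmpos
  have hurange : ∀ k, k ≤ 2*m → u k ∈ Set.Icc (-1:ℝ) 1 :=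
    fun k hk => ⟨hu0 ▸ humono (Nat.zero_le k), hu2m ▸ humono hk⟩
  set c : ℕ → ℝ := fun k => if k < m then -s else s with hc
  set ξn : ℕ → ℝ := fun k => max (u k) (min (c k) (u (k+1))) with hξn
  have hξmem : ∀ k, ξn k ∈ Set.Icc (u k) (u (k+1)) := fun k =>
    ⟨le_max_left _ _, max_le (hstep k).1 (min_le_right _ _)⟩
  have hξIcc : ∀ k, k < 2*m → ξn k ∈ Set.Icc (-1:ℝ) 1 := fun k hk =>
    ⟨le_trans (hurange k (by omega)).1 (hξmem k).1,
     le_trans (hξmem k).2 (hurange (k+1) (by omega)).2⟩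
  have hmain := hP (2*m) (fun i => u i) (fun i => ξn i)
    (fun i j hij => humono hij)
    (by simpa using hu0)
    (by simpa using hu2m)
    (fun i => by simpa [Fin.coe_castSucc, Fin.val_succ] using hξmem i)
    (fun i => by simpa [Fin.coe_castSucc, Fin.val_succ] using
      lt_of_le_of_lt (hstep i).2 hmesh)
  set S : ℝ := ∑ k ∈ Finset.range (2*m), f (ξn k) * (g (u (k+1)) - g (u k)) with hSdef
  have hSI : |S - I| < ε := by
    have hre : (∑ i : Fin (2*m), f (ξn ↑i) * (g (u (↑i+1)) - g (u ↑i))) = S :=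
      Fin.sum_univ_eq_sum_range (fun k => f (ξn k) * (g (u (k+1)) - g (u k))) (2*m)
    simp only [Fin.val_succ, Fin.coe_castSucc] at hmain
    rw [hre] at hmain
    exact hmain
  -- telescoping sums give the weights
  have htel1 : ∑ k ∈ Finset.range m, (g (u (k+1)) - g (u k)) = A := by
    rw [Finset.sum_range_sub (fun k => g (u k)) m, hum, hu0, hgx0]; ring
  have humm : u (m+m) = 1 := by rw [show m+m = 2*m from (two_mul m).symm]; exact hu2m
  have htel2 : ∑ k ∈ Finset.range m, (g (u (m+k+1)) - g (u (m+k))) = B := by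
    calc ∑ k ∈ Finset.range m, (g (u (m+k+1)) - g (u (m+k)))
        = g (u (m+m)) - g (u (m+0)) := Finset.sum_range_sub (fun k => g (u (m+k))) m
      _ = B := by rw [humm, Nat.add_zero, hum, hgx0]; linarith [hABsum]
  -- decomposition of S - Q
  have hQ : S - (A * f (-s) + B * f s) =
      (∑ k ∈ Finset.range m, (f (ξn k) - f (-s)) * (g (u (k+1)) - g (u k)))
      + ∑ k ∈ Finset.range m, (f (ξn (m+k)) - f s) * (g (u (m+k+1)) - g (u (m+k))) := by
    have hsplit : S = (∑ k ∈ Finset.range m, f (ξn k) * (g (u (k+1)) - g (u k)))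
        + ∑ k ∈ Finset.range m, f (ξn (m+k)) * (g (u (m+k+1)) - g (u (m+k))) := by
      rw [hSdef, show 2*m = m + m from two_mul m, Finset.sum_range_add]
    have e1 : ∑ k ∈ Finset.range m, (f (ξn k) - f (-s)) * (g (u (k+1)) - g (u k))
        = (∑ k ∈ Finset.range m, f (ξn k) * (g (u (k+1)) - g (u k))) - f (-s) * A := by
      rw [← htel1, Finset.mul_sum, ← Finset.sum_sub_distrib]
      exact Finset.sum_congr rfl (fun k _ => by ring)
    have e2 : ∑ k ∈ Finset.range m, (f (ξn (m+k)) - f s) * (g (u (m+k+1)) - g (u (m+k)))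
        = (∑ k ∈ Finset.range m, f (ξn (m+k)) * (g (u (m+k+1)) - g (u (m+k)))) - f s * B := by
      rw [← htel2, Finset.mul_sum, ← Finset.sum_sub_distrib]
      exact Finset.sum_congr rfl (fun k _ => by ring)
    rw [e1, e2, hsplit]; ring
  -- per-term bound
  have hterm : ∀ (k : ℕ), k < 2*m → ∀ cc, cc ∈ Set.Icc (-1:ℝ) 1 → c k = cc →
      |(f (ξn k) - f cc) * (g (u (k+1)) - g (u k))|
        ≤ Lg * Hf * ∫ τ in (u k)..(u (k+1)), |τ - cc| ^ r := by
    intro k hk cc hcc hck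
    have huk := hurange k (by omega)
    have huk1 := hurange (k+1) (by omega)
    have hfb := hf (ξn k) (hξIcc k hk) cc hcc
    have hgb := hg (u (k+1)) huk1 (u k) huk
    rw [abs_of_nonneg (by linarith [(hstep k).1] : (0:ℝ) ≤ u (k+1) - u k)] at hgb
    have hclamp : ∀ τ ∈ Set.Icc (u k) (u (k+1)), |ξn k - cc| ^ r ≤ |τ - cc| ^ r := by
      intro τ hτ
      apply Real.rpow_le_rpow (abs_nonneg _) ?_ hr.le
      simp only [hξn, hck]
      exact clamp_dist (u k) (u (k+1)) cc τ (hstep k).1 hτ.1 hτ.2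
    have hconst : |ξn k - cc| ^ r * (u (k+1) - u k) ≤ ∫ τ in (u k)..(u (k+1)), |τ - cc| ^ r := by
      have hmon := integral_mono_on (μ := volume) (hstep k).1
        intervalIntegrable_const
        ((cont_abs_rpow cc r hr).intervalIntegrable _ _) hclamp
      rwa [intervalIntegral.integral_const, smul_eq_mul, mul_comm] at hmon
    calc |(f (ξn k) - f cc) * (g (u (k+1)) - g (u k))|
        = |f (ξn k) - f cc| * |g (u (k+1)) - g (u k)| := abs_mul _ _
      _ ≤ (Hf * |ξn k - cc| ^ r) * (Lg * (u (k+1) - u k)) := by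
          apply mul_le_mul hfb hgb (abs_nonneg _) (by positivity)
      _ = (Lg * Hf) * (|ξn k - cc| ^ r * (u (k+1) - u k)) := by ring
      _ ≤ Lg * Hf * ∫ τ in (u k)..(u (k+1)), |τ - cc| ^ r :=
          mul_le_mul_of_nonneg_left hconst (by positivity)
  -- sums of integrals telescope
  have hint1 : ∑ k ∈ Finset.range m, ∫ τ in (u k)..(u (k+1)), |τ - (-s)| ^ r
      = ∫ τ in (-1:ℝ)..x0, |τ - (-s)| ^ r := by
    rw [intervalIntegral.sum_integral_adjacent_intervals
      (fun k _ => ((cont_abs_rpow (-s) r hr).intervalIntegrable _ _)), hu0, hum]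
  have hint2 : ∑ k ∈ Finset.range m, ∫ τ in (u (m+k))..(u (m+k+1)), |τ - s| ^ r
      = ∫ τ in x0..(1:ℝ), |τ - s| ^ r := by
    calc ∑ k ∈ Finset.range m, ∫ τ in (u (m+k))..(u (m+k+1)), |τ - s| ^ r
        = ∫ τ in (u (m+0))..(u (m+m)), |τ - s| ^ r :=
          intervalIntegral.sum_integral_adjacent_intervals (a := fun k => u (m+k)) (n := m)
            (fun k _ => ((cont_abs_rpow s r hr).intervalIntegrable _ _))
      _ = ∫ τ in x0..(1:ℝ), |τ - s| ^ r := by rw [Nat.add_zero, hum, humm]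
  have hbound1 : |∑ k ∈ Finset.range m, (f (ξn k) - f (-s)) * (g (u (k+1)) - g (u k))|
      ≤ ∑ k ∈ Finset.range m, Lg * Hf * ∫ τ in (u k)..(u (k+1)), |τ - (-s)| ^ r := by
    refine (Finset.abs_sum_le_sum_abs _ _).trans (Finset.sum_le_sum (fun k hk => ?_))
    have hkm := Finset.mem_range.mp hk
    exact hterm k (by omega) (-s) hx1mem (if_pos hkm)
  have hbound2 : |∑ k ∈ Finset.range m, (f (ξn (m+k)) - f s) * (g (u (m+k+1)) - g (u (m+k)))|
      ≤ ∑ k ∈ Finset.range m, Lg * Hf * ∫ τ in (u (m+k))..(u (m+k+1)), |τ - s| ^ r := by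
    refine (Finset.abs_sum_le_sum_abs _ _).trans (Finset.sum_le_sum (fun k hk => ?_))
    have hkm := Finset.mem_range.mp hk
    exact hterm (m+k) (by omega) s hx2mem (if_neg (by omega))
  have hQbound : |S - (A * f (-s) + B * f s)| ≤ Lg * Hf *
      ((∫ τ in (-1:ℝ)..x0, |τ - (-s)| ^ r) + ∫ τ in x0..(1:ℝ), |τ - s| ^ r) := by
    rw [hQ]
    calc |(∑ k ∈ Finset.range m, (f (ξn k) - f (-s)) * (g (u (k+1)) - g (u k)))
          + ∑ k ∈ Finset.range m, (f (ξn (m+k)) - f s) * (g (u (m+k+1)) - g (u (m+k)))|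
        ≤ |∑ k ∈ Finset.range m, (f (ξn k) - f (-s)) * (g (u (k+1)) - g (u k))|
          + |∑ k ∈ Finset.range m, (f (ξn (m+k)) - f s) * (g (u (m+k+1)) - g (u (m+k)))| :=
          abs_add_le _ _
      _ ≤ (∑ k ∈ Finset.range m, Lg * Hf * ∫ τ in (u k)..(u (k+1)), |τ - (-s)| ^ r)
          + ∑ k ∈ Finset.range m, Lg * Hf * ∫ τ in (u (m+k))..(u (m+k+1)), |τ - s| ^ r :=
          add_le_add hbound1 hbound2
      _ = Lg * Hf * ((∫ τ in (-1:ℝ)..x0, |τ - (-s)| ^ r) + ∫ τ in x0..(1:ℝ), |τ - s| ^ r) := by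
          rw [← Finset.mul_sum, ← Finset.mul_sum, hint1, hint2]; ring
  have hF := Fle r s x0 hr hs0 hs1 hx01 hx02
  have heq1 : (3 - Real.sqrt 3)/3 = 1 - s := by rw [hs]; ring
  have heq2 : (3 + Real.sqrt 3)/3 = 1 + s := by rw [hs]; ring
  have hfinal : Lg * Hf *
      ((∫ τ in (-1:ℝ)..x0, |τ - (-s)| ^ r) + ∫ τ in x0..(1:ℝ), |τ - s| ^ r)
      ≤ (Lg * Hf / (r + 1)) * (((3 - Real.sqrt 3) / 3) ^ (r + 1) + ((3 + Real.sqrt 3) / 3) ^ (r + 1)) := by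
    rw [heq1, heq2]
    calc Lg * Hf * ((∫ τ in (-1:ℝ)..x0, |τ - (-s)| ^ r) + ∫ τ in x0..(1:ℝ), |τ - s| ^ r)
        ≤ Lg * Hf * (((1-s)^(r+1) + (1+s)^(r+1)) / (r+1)) :=
          mul_le_mul_of_nonneg_left hF (by positivity)
      _ = (Lg * Hf / (r + 1)) * ((1-s)^(r+1) + (1+s)^(r+1)) := by ring
  have habs : |I - A * f (-s) - B * f s| ≤ |S - I| + |S - (A * f (-s) + B * f s)| := by
    have he : I - A * f (-s) - B * f s = -(S - I) + (S - (A * f (-s) + B * f s)) := by ring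
    rw [he]
    exact (abs_add_le _ _).trans (by rw [abs_neg])
  linarith [habs, hSI, hQbound, hfinal]
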